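/- Let G be a graph, N a nested set of separations of G, B an N-block, and C a connected component of G − B whose neighbourhood N(C) is finite. Then there exists X ∈ N with N(C) ⊆ ∂(X); consequently N(C) induces a complete subgraph in the torso of B. -/

import Mathlib

namespace Paper

variable {V : Type*} {ι : Type*}

def edgeVerts (X : Set (Sym2 V)) : Set V := {v | ∃ e ∈ X, v ∈ e}

def ecompl (G : SimpleGraph V) (X : Set (Sym2 V)) : Set (Sym2 V) := G.edgeSet \ X

def bdry (G : SimpleGraph V) (X : Set (Sym2 V)) : Set V :=
  {v | (∃ e ∈ X, v ∈ e) ∧ ∃ e ∈ ecompl G X, v ∈ e}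

def Nested (G : SimpleGraph V) (X Y : Set (Sym2 V)) : Prop :=
  X ⊆ Y ∨ ecompl G X ⊆ Y ∨ Y ⊆ X ∨ Y ⊆ ecompl G X

def ReachOutside (G : SimpleGraph V) (S : Set V) (u v : V) : Prop :=
  ∃ p : G.Walk u v, ∀ x ∈ p.support, x ∉ S

def IsCompOutside (G : SimpleGraph V) (S : Set V) (C : Set V) : Prop :=
  ∃ v, v ∉ S ∧ C = {u | ReachOutside G S u v}

def sEdges (G : SimpleGraph V) (C : Set V) : Set (Sym2 V) :=
  {e | e ∈ G.edgeSet ∧ ∃ v ∈ C, v ∈ e}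

def IsRay (G : SimpleGraph V) (f : ℕ → V) : Prop :=
  Function.Injective f ∧ ∀ n, G.Adj (f n) (f (n + 1))

def RayEquiv (G : SimpleGraph V) (f g : ℕ → V) : Prop :=
  ∀ S : Set V, S.Finite → ∃ N, ∀ i ≥ N, ∀ j ≥ N, ReachOutside G S (f i) (g j)

def LivesIn (f : ℕ → V) (X : Set (Sym2 V)) : Prop :=
  ∃ N, ∀ n ≥ N, f n ∈ edgeVerts X

def Dominates (G : SimpleGraph V) (v : V) (f : ℕ → V) : Prop :=
  ∃ (g : ℕ → ℕ) (p : (k : ℕ) → G.Walk v (f (g k))),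
    StrictMono g ∧ (∀ k, (p k).IsPath) ∧
    ∀ k l, k ≠ l → ∀ x, x ∈ (p k).support → x ∈ (p l).support → x = v


/-- The separation `X` separates the vertices `u` and `w`. -/
def SepVerts (G : SimpleGraph V) (X : Set (Sym2 V)) (u w : V) : Prop :=
  (u ∈ edgeVerts X \ bdry G X ∧ w ∈ edgeVerts (ecompl G X) \ bdry G X) ∨
  (w ∈ edgeVerts X \ bdry G X ∧ u ∈ edgeVerts (ecompl G X) \ bdry G X)

/-- `B` is an `N`-block: a maximal set of vertices no two of which are separated
by a separation in `N`. -/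
def IsBlock (G : SimpleGraph V) (N : Set (Set (Sym2 V))) (B : Set V) : Prop :=
  (∀ u ∈ B, ∀ w ∈ B, ∀ X ∈ N, ¬ SepVerts G X u w) ∧
  ∀ B' : Set V, B ⊆ B' → (∀ u ∈ B', ∀ w ∈ B', ∀ X ∈ N, ¬ SepVerts G X u w) → B' = B

def nbhdSet (G : SimpleGraph V) (C : Set V) : Set V :=
  {v | v ∉ C ∧ ∃ u ∈ C, G.Adj u v}

def intr (G : SimpleGraph V) (Y : Set (Sym2 V)) : Set V := edgeVerts Y \ bdry G Y
lemma ecompl_subset (G : SimpleGraph V) (Y : Set (Sym2 V)) : ecompl G Y ⊆ G.edgeSet :=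
  Set.diff_subset
lemma ecompl_ecompl {G : SimpleGraph V} {Y : Set (Sym2 V)} (h : Y ⊆ G.edgeSet) :
    ecompl G (ecompl G Y) = Y :=
  Set.diff_diff_cancel_left h
lemma bdry_ecompl {G : SimpleGraph V} {Y : Set (Sym2 V)} (h : Y ⊆ G.edgeSet) :
    bdry G (ecompl G Y) = bdry G Y := by
  unfold bdry; rw [ecompl_ecompl h]; ext v; exact and_comm
lemma mem_intr_iff {G : SimpleGraph V} {Y : Set (Sym2 V)} (hYE : Y ⊆ G.edgeSet) {v : V} :
    v ∈ intr G Y ↔ (∃ e ∈ Y, v ∈ e) ∧ ∀ e ∈ G.edgeSet, v ∈ e → e ∈ Y := by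
  constructor
  · rintro ⟨hv, hbd⟩
    refine ⟨hv, fun e he hve => ?_⟩
    by_contra hne
    exact hbd ⟨hv, ⟨e, ⟨he, hne⟩, hve⟩⟩
  · rintro ⟨hv, hall⟩
    refine ⟨hv, ?_⟩
    rintro ⟨-, e, ⟨heE, heY⟩, hve⟩
    exact heY (hall e heE hve)
lemma ecompl_anti {G : SimpleGraph V} {A B' : Set (Sym2 V)} (h : A ⊆ B') :
    ecompl G B' ⊆ ecompl G A := fun e he => ⟨he.1, fun hA => he.2 (h hA)⟩
lemma subset_ecompl_of {G : SimpleGraph V} {A B' : Set (Sym2 V)} (hB' : B' ⊆ G.edgeSet)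
    (h : A ⊆ ecompl G B') : B' ⊆ ecompl G A :=
  fun e he => ⟨hB' he, fun hA => (h hA).2 he⟩
lemma ecompl_subset_flip {G : SimpleGraph V} {A B' : Set (Sym2 V)}
    (h : ecompl G A ⊆ B') : ecompl G B' ⊆ A := by
  rintro e ⟨heE, heB⟩
  by_contra hna
  exact heB (h ⟨heE, hna⟩)

/-- An oriented separation from `N` whose interior avoids `B` but whose
complement's interior meets `B`. -/
def Good (G : SimpleGraph V) (N : Set (Set (Sym2 V))) (B : Set V) (Y : Set (Sym2 V)) : Prop :=
  (Y ∈ N ∨ ecompl G Y ∈ N) ∧ Y ⊆ G.edgeSet ∧ (∀ b ∈ B, b ∉ intr G Y) ∧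
    ∃ b ∈ B, b ∈ intr G (ecompl G Y)

def Rel (G : SimpleGraph V) (A B' : Set (Sym2 V)) : Prop :=
  A ⊆ B' ∨ B' ⊆ A ∨ A ⊆ ecompl G B' ∨ ecompl G A ⊆ B'

lemma nested_R {G : SimpleGraph V} {X X₂ : Set (Sym2 V)} (hX : X ⊆ G.edgeSet)
    (h : Nested G X X₂) : Rel G X X₂ := by
  rcases h with h | h | h | h
  · exact Or.inl h
  · exact Or.inr (Or.inr (Or.inr h))
  · exact Or.inr (Or.inl h)
  · exact Or.inr (Or.inr (Or.inl (subset_ecompl_of hX h)))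

lemma R_flip_right {G : SimpleGraph V} {A B' : Set (Sym2 V)} (hB : B' ⊆ G.edgeSet)
    (h : Rel G A B') : Rel G A (ecompl G B') := by
  rcases h with h | h | h | h
  · exact Or.inr (Or.inr (Or.inl (by rwa [ecompl_ecompl hB])))
  · exact Or.inr (Or.inr (Or.inr (ecompl_anti h)))
  · exact Or.inl h
  · exact Or.inr (Or.inl (ecompl_subset_flip h))

lemma R_flip_left {G : SimpleGraph V} {A B' : Set (Sym2 V)} (hA : A ⊆ G.edgeSet)
    (hB : B' ⊆ G.edgeSet) (h : Rel G A B') : Rel G (ecompl G A) B' := by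
  rcases h with h | h | h | h
  · exact Or.inr (Or.inr (Or.inr (by rwa [ecompl_ecompl hA])))
  · exact Or.inr (Or.inr (Or.inl (ecompl_anti h)))
  · exact Or.inr (Or.inl (subset_ecompl_of hB h))
  · exact Or.inl h

lemma nested_cases {G : SimpleGraph V} {N : Set (Set (Sym2 V))} {B : Set V}
    (hsub : ∀ X ∈ N, X ⊆ G.edgeSet)
    (hnested : ∀ X ∈ N, ∀ Y ∈ N, Nested G X Y)
    {Y Y₂ : Set (Sym2 V)} (hY : Good G N B Y) (hY₂ : Good G N B Y₂) :
    Y ⊆ Y₂ ∨ Y₂ ⊆ Y ∨ Y ⊆ ecompl G Y₂ ∨ ecompl G Y ⊆ Y₂ := by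
  have hYE := hY.2.1
  have hY₂E := hY₂.2.1
  rcases hY.1 with h1 | h1 <;> rcases hY₂.1 with h2 | h2
  · exact nested_R hYE (hnested _ h1 _ h2)
  · have := R_flip_right (ecompl_subset G Y₂) (nested_R hYE (hnested _ h1 _ h2))
    rwa [ecompl_ecompl hY₂E] at this
  · have := R_flip_left (ecompl_subset G Y) hY₂E
      (nested_R (ecompl_subset G Y) (hnested _ h1 _ h2))
    rwa [ecompl_ecompl hYE] at this
  · have t1 := R_flip_right (ecompl_subset G Y₂)
      (nested_R (ecompl_subset G Y) (hnested _ h1 _ h2))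
    rw [ecompl_ecompl hY₂E] at t1
    have t2 := R_flip_left (ecompl_subset G Y) hY₂E t1
    rwa [ecompl_ecompl hYE] at t2

lemma sepverts_symm {G : SimpleGraph V} {X : Set (Sym2 V)} {u w : V}
    (h : SepVerts G X u w) : SepVerts G X w u := h.symm

lemma not_sepverts_self {G : SimpleGraph V} {X : Set (Sym2 V)} {u : V} :
    ¬ SepVerts G X u u := by
  rintro (⟨⟨h1, h2⟩, ⟨h3, h4⟩⟩ | ⟨⟨h1, h2⟩, ⟨h3, h4⟩⟩) <;> exact h2 ⟨h1, h3⟩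

lemma good_of_sep {G : SimpleGraph V} {N : Set (Set (Sym2 V))} {B : Set V}
    (hsub : ∀ X ∈ N, X ⊆ G.edgeSet) (hB : IsBlock G N B)
    {X : Set (Sym2 V)} (hX : X ∈ N) {p b : V} (hb : b ∈ B)
    (hsep : SepVerts G X p b) : ∃ Y, Good G N B Y ∧ p ∈ intr G Y := by
  have hXE := hsub X hX
  rcases hsep with ⟨hp, hbX⟩ | ⟨hbX, hp⟩
  · refine ⟨X, ⟨Or.inl hX, hXE, ?_, b, hb, ?_⟩, hp⟩
    · intro b' hb' hbint
      exact hB.1 b' hb' b hb X hX (Or.inl ⟨hbint, hbX⟩)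
    · show b ∈ edgeVerts (ecompl G X) \ bdry G (ecompl G X)
      rwa [bdry_ecompl hXE]
  · refine ⟨ecompl G X, ⟨Or.inr (by rwa [ecompl_ecompl hXE]), ecompl_subset G X, ?_, b, hb, ?_⟩,
      ?_⟩
    · intro b' hb' hbint
      refine hB.1 b' hb' b hb X hX (Or.inr ⟨hbX, ?_⟩)
      have : b' ∈ edgeVerts (ecompl G X) \ bdry G (ecompl G X) := hbint
      rwa [bdry_ecompl hXE] at this
    · show b ∈ intr G (ecompl G (ecompl G X))
      rw [ecompl_ecompl hXE]
      exact hbX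
    · show p ∈ edgeVerts (ecompl G X) \ bdry G (ecompl G X)
      rwa [bdry_ecompl hXE]

lemma sep_aux {G : SimpleGraph V} {N : Set (Set (Sym2 V))} {B : Set V}
    (hsub : ∀ X ∈ N, X ⊆ G.edgeSet) (hB : IsBlock G N B) {p : V} (hp : p ∉ B) :
    ∃ Y, Good G N B Y ∧ p ∈ intr G Y := by
  by_contra hcon
  push_neg at hcon
  have heq : insert p B = B := by
    apply hB.2 _ (Set.subset_insert p B)
    rintro u hu w hw X hX hsep
    rcases Set.mem_insert_iff.1 hu with rfl | huB <;>
      rcases Set.mem_insert_iff.1 hw with rfl | hwB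
    · exact not_sepverts_self hsep
    · obtain ⟨Y, hY, hpi⟩ := good_of_sep hsub hB hX hwB hsep
      exact hcon Y hY hpi
    · obtain ⟨Y, hY, hpi⟩ := good_of_sep hsub hB hX huB (sepverts_symm hsep)
      exact hcon Y hY hpi
    · exact hB.1 u huB w hwB X hX hsep
  exact hp (heq ▸ Set.mem_insert p B)

lemma edgeVerts_mono {A B' : Set (Sym2 V)} (h : A ⊆ B') : edgeVerts A ⊆ edgeVerts B' := by
  rintro v ⟨e, he, hve⟩
  exact ⟨e, h he, hve⟩

lemma key {G : SimpleGraph V} {N : Set (Set (Sym2 V))} {B : Set V}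
    (hsub : ∀ X ∈ N, X ⊆ G.edgeSet)
    (hnested : ∀ X ∈ N, ∀ Y ∈ N, Nested G X Y)
    (hB : IsBlock G N B) :
    ∀ {c d : V} (W : G.Walk c d), (∀ x ∈ W.support, x ∉ B) →
    ∀ Y, Good G N B Y → c ∈ intr G Y →
    ∃ Y', Good G N B Y' ∧ Y ⊆ Y' ∧ d ∈ intr G Y' := by
  intro c d W
  induction W with
  | nil =>
    intro _ Y hY hc
    exact ⟨Y, hY, subset_rfl, hc⟩
  | @cons a b d hab W ih =>
    intro hsupp Y hY hc
    have hYE := hY.2.1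
    have hcall := ((mem_intr_iff hYE).1 hc).2
    have hfE : s(a, b) ∈ G.edgeSet := G.mem_edgeSet.mpr hab
    have hfY : s(a, b) ∈ Y := hcall _ hfE (Sym2.mem_mk_left a b)
    have hbEV : b ∈ edgeVerts Y := ⟨s(a, b), hfY, Sym2.mem_mk_right a b⟩
    have hsupp' : ∀ x ∈ W.support, x ∉ B := fun x hx =>
      hsupp x (by rw [SimpleGraph.Walk.support_cons]; exact List.mem_cons_of_mem _ hx)
    by_cases hbd : b ∈ bdry G Y
    · have hbB : b ∉ B := hsupp b
        (by rw [SimpleGraph.Walk.support_cons]; exact List.mem_cons_of_mem _ W.start_mem_support)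
      obtain ⟨Y₂, hY₂, hbi⟩ := sep_aux hsub hB hbB
      have hY₂E := hY₂.2.1
      have hb2all := ((mem_intr_iff hY₂E).1 hbi).2
      have hsub12 : Y ⊆ Y₂ := by
        rcases nested_cases hsub hnested hY hY₂ with h | h | h | h
        · exact h
        · exfalso
          obtain ⟨-, e, ⟨heE, heY⟩, hbe⟩ := hbd
          exact heY (h (hb2all e heE hbe))
        · exfalso
          exact (h hfY).2 (hb2all _ hfE (Sym2.mem_mk_right a b))
        · exfalso
          obtain ⟨w, hwB, hwi⟩ := hY.2.2.2
          obtain ⟨⟨e0, he0, hwe0⟩, hwall⟩ := (mem_intr_iff (ecompl_subset G Y)).1 hwi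
          apply hY₂.2.2.1 w hwB
          exact (mem_intr_iff hY₂E).2
            ⟨⟨e0, h he0, hwe0⟩, fun e heE hwe => h (hwall e heE hwe)⟩
      obtain ⟨Y', hY', hsub2, hd⟩ := ih hsupp' Y₂ hY₂ hbi
      exact ⟨Y', hY', hsub12.trans hsub2, hd⟩
    · exact ih hsupp' Y hY ⟨hbEV, hbd⟩

theorem stmt17 (G : SimpleGraph V) (N : Set (Set (Sym2 V)))
    (hsub : ∀ X ∈ N, X ⊆ G.edgeSet)
    (hfin : ∀ X ∈ N, (bdry G X).Finite)
    (hnested : ∀ X ∈ N, ∀ Y ∈ N, Nested G X Y)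
    (B : Set V) (hB : IsBlock G N B)
    (C : Set V) (hC : IsCompOutside G B C)
    (hNC : (nbhdSet G C).Finite) :
    (∃ X ∈ N, nbhdSet G C ⊆ bdry G X) ∧
    ∀ x ∈ nbhdSet G C, ∀ y ∈ nbhdSet G C, x ≠ y →
      (G.Adj x y ∨ ∃ X ∈ N, x ∈ bdry G X ∧ y ∈ bdry G X) := by
  obtain ⟨v, hvB, hCeq⟩ := hC
  have hvC : v ∈ C := by
    rw [hCeq]
    refine ⟨SimpleGraph.Walk.nil, ?_⟩
    intro x hx
    rw [SimpleGraph.Walk.support_nil, List.mem_singleton] at hx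
    subst hx
    exact hvB
  have hwalkv : ∀ u ∈ C, ∃ p : G.Walk u v, ∀ x ∈ p.support, x ∉ B := by
    intro u hu
    rw [hCeq] at hu
    exact hu
  have hSB : nbhdSet G C ⊆ B := by
    intro w hw
    obtain ⟨hwC, u, huC, hadj⟩ := hw
    by_contra hwB
    obtain ⟨p, hp⟩ := hwalkv u huC
    apply hwC
    rw [hCeq]
    refine ⟨SimpleGraph.Walk.cons hadj.symm p, ?_⟩
    intro x hx
    rw [SimpleGraph.Walk.support_cons] at hx
    rcases List.mem_cons.1 hx with rfl | hx
    · exact hwB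
    · exact hp x hx
  have hwalkCC : ∀ a ∈ C, ∀ b ∈ C, ∃ W : G.Walk a b, ∀ x ∈ W.support, x ∉ B := by
    intro a ha b hb
    obtain ⟨p, hp⟩ := hwalkv a ha
    obtain ⟨q, hq⟩ := hwalkv b hb
    refine ⟨p.append q.reverse, ?_⟩
    intro x hx
    rw [SimpleGraph.Walk.mem_support_append_iff] at hx
    rcases hx with hx | hx
    · exact hp x hx
    · exact hq x (by rwa [SimpleGraph.Walk.support_reverse, List.mem_reverse] at hx)
  have cover : ∀ T : Set V, T.Finite → T ⊆ nbhdSet G C →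
      ∃ Y c, Good G N B Y ∧ c ∈ C ∧ c ∈ intr G Y ∧ T ⊆ edgeVerts Y := by
    intro T hT
    refine Set.Finite.induction_on
      (motive := fun T _ => T ⊆ nbhdSet G C →
        ∃ Y c, Good G N B Y ∧ c ∈ C ∧ c ∈ intr G Y ∧ T ⊆ edgeVerts Y) T hT ?_ ?_
    · intro _
      obtain ⟨Y, hY, hvi⟩ := sep_aux hsub hB hvB
      exact ⟨Y, v, hY, hvC, hvi, by simp⟩
    · intro a T haT hTfin ih hins
      obtain ⟨Y, c, hY, hcC, hci, hTY⟩ :=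
        ih (fun x hx => hins (Set.mem_insert_iff.mpr (Or.inr hx)))
      have haS : a ∈ nbhdSet G C := hins (Set.mem_insert _ _)
      obtain ⟨hanC, u, huC, hadj⟩ := haS
      obtain ⟨W, hW⟩ := hwalkCC c hcC u huC
      obtain ⟨Y', hY', hYY', hui⟩ := key hsub hnested hB W hW Y hY hci
      refine ⟨Y', u, hY', huC, hui, ?_⟩
      intro x hx
      rcases Set.mem_insert_iff.1 hx with rfl | hx
      · have hxY : s(u, x) ∈ Y' := ((mem_intr_iff hY'.2.1).1 hui).2 s(u, x)
          (G.mem_edgeSet.mpr hadj) (Sym2.mem_mk_left u x)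
        exact ⟨s(u, x), hxY, Sym2.mem_mk_right u x⟩
      · obtain ⟨e, he, hxe⟩ := hTY hx
        exact ⟨e, hYY' he, hxe⟩
  obtain ⟨Y, c, hY, -, -, hSY⟩ := cover _ hNC Set.Subset.rfl
  have hSbd : nbhdSet G C ⊆ bdry G Y := by
    intro w hw
    have hwB := hSB hw
    have hwev := hSY hw
    by_contra hbd
    exact hY.2.2.1 w hwB ⟨hwev, hbd⟩
  have hfinal : ∃ X ∈ N, nbhdSet G C ⊆ bdry G X := by
    rcases hY.1 with h | h
    · exact ⟨Y, h, hSbd⟩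
    · exact ⟨ecompl G Y, h, by rwa [bdry_ecompl hY.2.1]⟩
  refine ⟨hfinal, ?_⟩
  intro x hx y hy _
  obtain ⟨X, hX, hXb⟩ := hfinal
  exact Or.inr ⟨X, hX, hXb hx, hXb hy⟩

end Paper
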